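/- Let C be an extended Choquet cone and let w ∈ Idem(C). Then the set {x ∈ C : w ≫ ε(x)} is open in C. -/
import Mathlib


open scoped ENNReal NNReal

/-- The positive real numbers, used as scalars for cones. -/
abbrev PosReal : Type := {t : ℝ // 0 < t}

/-- An extended Choquet cone: an algebraically ordered topological cone that is a lattice
under the algebraic order, with addition distributing over `⊓` and `⊔`, whose topology is
compact, Hausdorff and locally convex. -/
class ECCone (C : Type*) extends AddCommMonoid C, Lattice C, TopologicalSpace C where
  psmul : PosReal → C → C
  psmul_add : ∀ (t : PosReal) (x y : C), psmul t (x + y) = psmul t x + psmul t y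
  add_psmul : ∀ (s t : PosReal) (x : C), psmul (s + t) x = psmul s x + psmul t x
  psmul_mul : ∀ (s t : PosReal) (x : C), psmul s (psmul t x) = psmul (s * t) x
  one_psmul : ∀ x : C, psmul 1 x = x
  psmul_zero : ∀ t : PosReal, psmul t 0 = 0
  le_iff_exists_add : ∀ x y : C, x ≤ y ↔ ∃ z, x + z = y
  add_inf_distrib : ∀ x y z : C, x + (y ⊓ z) = (x + y) ⊓ (x + z)
  add_sup_distrib : ∀ x y z : C, x + (y ⊔ z) = (x + y) ⊔ (x + z)
  continuous_add' : Continuous fun p : C × C => p.1 + p.2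
  continuous_psmul : Continuous fun p : PosReal × C => psmul p.1 p.2
  compact : CompactSpace C
  t2 : T2Space C
  locally_convex : ∀ (x : C) (U : Set C), IsOpen U → x ∈ U →
    ∃ V : Set C, IsOpen V ∧ x ∈ V ∧ V ⊆ U ∧
      ∀ y ∈ V, ∀ z ∈ V, ∀ s t : PosReal, s.1 + t.1 = 1 → psmul s y + psmul t z ∈ V

/-- The way-below relation for functions into `[0,∞]`, relative to a set `S` of functions:
`f ≪ g` iff for every increasing sequence in `S` whose pointwise supremum dominates `g`,
some term of the sequence dominates `f`. -/
def FWayBelow {α : Type*} (S : Set (α → ℝ≥0∞)) (f g : α → ℝ≥0∞) : Prop :=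
  ∀ h : ℕ → α → ℝ≥0∞, (∀ n, h n ∈ S) → Monotone h → (∀ a, g a ≤ ⨆ n, h n a) → ∃ n, f ≤ h n

namespace ECCone

variable {C : Type*} [ECCone C]

/-- `w` is an idempotent: `2w = w`. -/
def IsIdem (w : C) : Prop := w + w = w

/-- `e` is the support idempotent of `x`: the maximum of `{z : x + z = x}`. -/
def IsSuppIdem (x e : C) : Prop := x + e = x ∧ ∀ z : C, x + z = x → z ≤ e

/-- `w₁ ≫ w₂` in the lattice of idempotents with the opposite order: whenever a nonempty
downward directed family of idempotents has an infimum `≤ w₂`, some member is `≤ w₁`. -/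
def IdemWayBelow (w₁ w₂ : C) : Prop :=
  ∀ D : Set C, D.Nonempty → (∀ v ∈ D, IsIdem v) → DirectedOn (· ≥ ·) D →
    ∀ m : C, IsGLB D m → m ≤ w₂ → ∃ v ∈ D, v ≤ w₁

/-- A compact idempotent: `w ≫ w`. -/
def IsCompactIdem (w : C) : Prop := IsIdem w ∧ IdemWayBelow w w

/-- `v` is compact relative to `w`: whenever a nonempty downward directed family of
idempotents has an infimum `≤ v`, some member `u` satisfies `u ⊓ w ≤ v`. -/
def CompactRelTo (v w : C) : Prop :=
  ∀ D : Set C, D.Nonempty → (∀ u ∈ D, IsIdem u) → DirectedOn (· ≥ ·) D →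
    ∀ m : C, IsGLB D m → m ≤ v → ∃ u ∈ D, u ⊓ w ≤ v

/-- `C` has an abundance of compact idempotents: every idempotent is an infimum
of compact idempotents. -/
def HasAbundantCompactIdem (C : Type*) [ECCone C] : Prop :=
  ∀ w : C, IsIdem w → ∃ D : Set C, (∀ v ∈ D, IsCompactIdem v) ∧ IsGLB D w

/-- `C` is strongly connected: `{x : x ≤ w}` is connected for every idempotent `w`. -/
def StronglyConnected (C : Type*) [ECCone C] : Prop :=
  ∀ w : C, IsIdem w → IsConnected {x : C | x ≤ w}

/-- A linear function on a cone: additive, homogeneous, sending `0` to `0`. -/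
def IsLinFun (f : C → ℝ≥0∞) : Prop :=
  f 0 = 0 ∧ (∀ x y : C, f (x + y) = f x + f y) ∧
    ∀ (t : PosReal) (x : C), f (psmul t x) = ENNReal.ofReal t.1 * f x

/-- Membership in `Lsc(C)`: linear and lower semicontinuous. -/
def MemLsc (f : C → ℝ≥0∞) : Prop := IsLinFun f ∧ LowerSemicontinuous f

/-- Membership in `Lsc_σ(C)`: in `Lsc(C)` and `f⁻¹((a,∞])` is σ-compact for all `a < ∞`. -/
def MemLscSigma (f : C → ℝ≥0∞) : Prop :=
  MemLsc f ∧ ∀ a : ℝ≥0, IsSigmaCompact {x : C | (a : ℝ≥0∞) < f x}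

/-- Membership in `A(C)`: linear and continuous. -/
def MemA (f : C → ℝ≥0∞) : Prop := IsLinFun f ∧ Continuous f

/-- `w = supp f`, the supremum of `{x : f x = 0}`. -/
def IsSupp (f : C → ℝ≥0∞) (w : C) : Prop := IsLUB {x : C | f x = 0} w

/-- The relation `f ◁ g`: `f ≤ (1-ε)g` for some `ε > 0`, and `f` is continuous at every
point where `g` is finite. -/
def Lhd (f g : C → ℝ≥0∞) : Prop :=
  (∃ ε : ℝ, 0 < ε ∧ ∀ x, f x ≤ ENNReal.ofReal (1 - ε) * g x) ∧
    ∀ x : C, g x ≠ ⊤ → ContinuousAt f x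

end ECCone

section Stmt3Proof

open ECCone Set

variable {C : Type*} [ECCone C]

instance (priority := 100) ECCone.toCompactSpace : CompactSpace C := ECCone.compact
instance (priority := 100) ECCone.toT2Space : T2Space C := ECCone.t2
instance (priority := 100) ECCone.toContinuousAdd : ContinuousAdd C := ⟨ECCone.continuous_add'⟩

namespace Stmt3Aux

lemma le_self_add' (x z : C) : x ≤ x + z :=
  (ECCone.le_iff_exists_add x (x + z)).2 ⟨z, rfl⟩

lemma add_le_add_left' {a b : C} (h : a ≤ b) (x : C) : x + a ≤ x + b := by
  obtain ⟨c, hc⟩ := (ECCone.le_iff_exists_add a b).1 h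
  exact (ECCone.le_iff_exists_add _ _).2 ⟨c, by rw [add_assoc, hc]⟩

lemma idem_add {u v : C} (hu : IsIdem u) (hv : IsIdem v) : IsIdem (u + v) := by
  unfold IsIdem at *
  calc u + v + (u + v) = (u + u) + (v + v) := by abel
    _ = u + v := by rw [hu, hv]

lemma idem_add_eq_of_le {v b : C} (hv : IsIdem v) (h : v ≤ b) : v + b = b := by
  obtain ⟨c, hc⟩ := (ECCone.le_iff_exists_add v b).1 h
  calc v + b = (v + v) + c := by rw [← hc]; abel
    _ = v + c := by rw [hv]
    _ = b := hc

/-- one half as a positive real -/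
noncomputable def half : PosReal := ⟨1/2, by norm_num⟩

lemma two_psmul_idem {v : C} (hv : IsIdem v) : ECCone.psmul ((1 : PosReal) + 1) v = v := by
  rw [ECCone.add_psmul, ECCone.one_psmul]
  exact hv

lemma half_psmul_idem {v : C} (hv : IsIdem v) : ECCone.psmul half v = v := by
  conv_lhs => rw [← two_psmul_idem hv]
  rw [ECCone.psmul_mul]
  have h1 : (half * ((1 : PosReal) + 1)) = 1 := by
    apply Subtype.ext
    show (half : PosReal).1 * ((1 : PosReal) + 1).1 = (1 : PosReal).1
    have : ((1 : PosReal) + 1).1 = (1 : ℝ) + 1 := rfl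
    rw [this]
    show (1/2 : ℝ) * ((1 : ℝ) + 1) = 1
    norm_num
  rw [h1, ECCone.one_psmul]

/-- In a "convex" set, the sum of two idempotents of the set stays in the set. -/
lemma conv_add {V : Set C}
    (hV : ∀ y ∈ V, ∀ z ∈ V, ∀ s t : PosReal, s.1 + t.1 = 1 →
      ECCone.psmul s y + ECCone.psmul t z ∈ V)
    {u v : C} (hu : IsIdem u) (hv : IsIdem v) (huV : u ∈ V) (hvV : v ∈ V) : u + v ∈ V := by
  have hst : (half : PosReal).1 + (half : PosReal).1 = 1 := by
    show (1/2 : ℝ) + 1/2 = 1; norm_num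
  have := hV u huV v hvV half half hst
  rwa [half_psmul_idem hu, half_psmul_idem hv] at this

lemma isClosed_idem : IsClosed {v : C | IsIdem v} :=
  isClosed_eq (continuous_id.add continuous_id) continuous_id

lemma isClosed_Ici' (a : C) : IsClosed {z : C | a ≤ z} := by
  have h : {z : C | a ≤ z} = Set.range (fun c : C => a + c) := by
    ext z
    simp only [Set.mem_setOf_eq, Set.mem_range, ECCone.le_iff_exists_add]
  rw [h]
  exact (isCompact_range (continuous_const.add continuous_id)).isClosed

lemma isClosed_Iic' (b : C) : IsClosed {z : C | z ≤ b} := by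
  have h1 : IsClosed {p : C × C | p.1 + p.2 = b} :=
    isClosed_eq (continuous_fst.add continuous_snd) continuous_const
  have h2 : IsCompact (Prod.fst '' {p : C × C | p.1 + p.2 = b}) :=
    (h1.isCompact).image continuous_fst
  have h3 : {z : C | z ≤ b} = Prod.fst '' {p : C × C | p.1 + p.2 = b} := by
    ext z
    constructor
    · intro hz
      obtain ⟨c, hc⟩ := (ECCone.le_iff_exists_add z b).1 hz
      exact ⟨(z, c), hc, rfl⟩
    · rintro ⟨⟨z', c⟩, hc, rfl⟩
      exact (ECCone.le_iff_exists_add _ _).2 ⟨c, hc⟩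
  rw [h3]
  exact h2.isClosed

/-- Existence of the supremum of the idempotents of a convex set containing an
idempotent `m`; the supremum is an idempotent lying in the closure of the set. -/
lemma exists_lub {m : C} (hm : IsIdem m) {V : Set C} (hmV : m ∈ V)
    (hconv : ∀ y ∈ V, ∀ z ∈ V, ∀ s t : PosReal, s.1 + t.1 = 1 →
      ECCone.psmul s y + ECCone.psmul t z ∈ V) :
    ∃ q : C, IsIdem q ∧ q ∈ closure V ∧ IsLUB {a : C | IsIdem a ∧ a ∈ V} q := by
  classical
  have hScomp : IsCompact (closure V ∩ {v : C | IsIdem v}) :=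
    (isClosed_closure.inter isClosed_idem).isCompact
  set t : C ⊕ C → Set C := fun i =>
    Sum.elim (fun a => if IsIdem a ∧ a ∈ V then {z : C | a ≤ z} else Set.univ)
      (fun b => if (∀ a : C, IsIdem a → a ∈ V → a ≤ b) then {z : C | z ≤ b} else Set.univ) i
    with ht
  have htc : ∀ i, IsClosed (t i) := by
    rintro (a | b) <;> rw [ht] <;> simp only [Sum.elim_inl, Sum.elim_inr] <;> split
    · exact isClosed_Ici' _
    · exact isClosed_univ
    · exact isClosed_Iic' _
    · exact isClosed_univ
  have hst : ∀ u : Finset (C ⊕ C), ((closure V ∩ {v : C | IsIdem v}) ∩ ⋂ i ∈ u, t i).Nonempty := by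
    intro u
    have key : ∃ q₀ : C, q₀ ∈ V ∧ IsIdem q₀ ∧
        ∀ a : C, Sum.inl a ∈ u → IsIdem a → a ∈ V → a ≤ q₀ := by
      induction u using Finset.induction_on with
      | empty => exact ⟨m, hmV, hm, by simp⟩
      | @insert i u hni ih =>
        obtain ⟨q₀, h1, h2, h3⟩ := ih
        cases i with
        | inl a =>
          by_cases hca : IsIdem a ∧ a ∈ V
          · refine ⟨q₀ + a, conv_add hconv h2 hca.1 h1 hca.2, idem_add h2 hca.1, ?_⟩
            intro a' ha' hi' hV'
            rcases Finset.mem_insert.1 ha' with heq | hmem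
            · have : a' = a := Sum.inl.inj heq
              subst this
              calc a' ≤ a' + q₀ := le_self_add' a' q₀
                _ = q₀ + a' := add_comm _ _
            · exact (h3 a' hmem hi' hV').trans (le_self_add' q₀ a)
          · refine ⟨q₀, h1, h2, ?_⟩
            intro a' ha' hi' hV'
            rcases Finset.mem_insert.1 ha' with heq | hmem
            · exact absurd ⟨(Sum.inl.inj heq ▸ hi'), (Sum.inl.inj heq ▸ hV')⟩ hca
            · exact h3 a' hmem hi' hV'
        | inr b =>
          refine ⟨q₀, h1, h2, ?_⟩
          intro a' ha' hi' hV'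
          rcases Finset.mem_insert.1 ha' with heq | hmem
          · exact absurd heq (by simp)
          · exact h3 a' hmem hi' hV'
    obtain ⟨q₀, hq₀V, hq₀i, hq₀a⟩ := key
    refine ⟨q₀, ⟨subset_closure hq₀V, hq₀i⟩, ?_⟩
    simp only [Set.mem_iInter]
    rintro (a | b) hi <;> rw [ht] <;> simp only [Sum.elim_inl, Sum.elim_inr] <;> split
    · next h => exact hq₀a a hi h.1 h.2
    · trivial
    · next h => exact h q₀ hq₀i hq₀V
    · trivial
  obtain ⟨q, ⟨hqc, hqi⟩, hq⟩ := hScomp.inter_iInter_nonempty t htc hst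
  simp only [Set.mem_iInter] at hq
  refine ⟨q, hqi, hqc, ?_, ?_⟩
  · rintro a ⟨hai, haV⟩
    have h := hq (Sum.inl a)
    rw [ht] at h
    simp only [Sum.elim_inl] at h
    rw [if_pos ⟨hai, haV⟩] at h
    exact h
  · intro b hb
    have hb' : ∀ a : C, IsIdem a → a ∈ V → a ≤ b := fun a ha haV => hb ⟨ha, haV⟩
    have h := hq (Sum.inr b)
    rw [ht] at h
    simp only [Sum.elim_inr] at h
    rw [if_pos hb'] at h
    exact h

/-- If `w ≫ u` and `m ≤ u` is an idempotent, then `m` has a neighborhood all of whose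
idempotents lie below `w`. -/
lemma nbhd_of_wayBelow {w u m : C} (hwu : IdemWayBelow w u) (hm : IsIdem m) (hmu : m ≤ u) :
    ∃ N : Set C, IsOpen N ∧ m ∈ N ∧ ∀ v ∈ N, IsIdem v → v ≤ w := by
  by_contra hcon
  push_neg at hcon
  set 𝒱 : Set (Set C) := {V | IsOpen V ∧ m ∈ V ∧ ∀ y ∈ V, ∀ z ∈ V, ∀ s t : PosReal,
    s.1 + t.1 = 1 → ECCone.psmul s y + ECCone.psmul t z ∈ V} with h𝒱
  set D : Set C := {q | ∃ V ∈ 𝒱, IsIdem q ∧ q ∈ closure V ∧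
    IsLUB {a : C | IsIdem a ∧ a ∈ V} q} with hD
  have hVex : ∀ U : Set C, IsOpen U → m ∈ U → ∃ V ∈ 𝒱, V ⊆ U := by
    intro U hU hmU
    obtain ⟨V, h1, h2, h3, h4⟩ := ECCone.locally_convex m U hU hmU
    exact ⟨V, ⟨h1, h2, h4⟩, h3⟩
  have hDq : ∀ V ∈ 𝒱, ∃ q ∈ D, q ∈ closure V ∧ IsLUB {a : C | IsIdem a ∧ a ∈ V} q := by
    intro V hV
    obtain ⟨q, h1, h2, h3⟩ := exists_lub hm hV.2.1 hV.2.2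
    exact ⟨q, ⟨V, hV, h1, h2, h3⟩, h2, h3⟩
  have hne : D.Nonempty := by
    obtain ⟨V, hV, -⟩ := hVex Set.univ isOpen_univ trivial
    obtain ⟨q, hq, -⟩ := hDq V hV
    exact ⟨q, hq⟩
  have hidem : ∀ v ∈ D, IsIdem v := by
    rintro v ⟨V, -, h, -, -⟩
    exact h
  have hdir : DirectedOn (· ≥ ·) D := by
    rintro q₁ ⟨V₁, hV₁, -, -, hl₁⟩ q₂ ⟨V₂, hV₂, -, -, hl₂⟩
    obtain ⟨V₃, hV₃, hsub⟩ := hVex (V₁ ∩ V₂) (hV₁.1.inter hV₂.1) ⟨hV₁.2.1, hV₂.2.1⟩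
    obtain ⟨q₃, hq₃D, -, hl₃⟩ := hDq V₃ hV₃
    refine ⟨q₃, hq₃D, ?_, ?_⟩
    · exact hl₃.2 (fun a ha => hl₁.1 ⟨ha.1, (hsub ha.2).1⟩)
    · exact hl₃.2 (fun a ha => hl₂.1 ⟨ha.1, (hsub ha.2).2⟩)
  have hglb : IsGLB D m := by
    constructor
    · rintro q ⟨V, hV, -, -, hl⟩
      exact hl.1 ⟨hm, hV.2.1⟩
    · intro b hb
      have hmem : m ∈ {z : C | b ≤ z} := by
        rw [← (isClosed_Ici' b).closure_eq]
        rw [mem_closure_iff]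
        intro P hP hmP
        obtain ⟨Q, hQn, hQc, hQsub⟩ := exists_mem_nhds_isClosed_subset (hP.mem_nhds hmP)
        obtain ⟨V, hV, hVsub⟩ := hVex (interior Q) isOpen_interior (mem_interior_iff_mem_nhds.2 hQn)
        obtain ⟨q, hqD, hqcl, -⟩ := hDq V hV
        have hcl : closure V ⊆ Q := by
          refine (closure_mono hVsub).trans ?_
          exact (closure_mono interior_subset).trans hQc.closure_eq.subset
        exact ⟨q, hQsub (hcl hqcl), hb hqD⟩
      exact hmem
  obtain ⟨q, hqD, hqw⟩ := hwu D hne hidem hdir m hglb hmu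
  obtain ⟨V, hV, hqi, hqcl, hql⟩ := hqD
  obtain ⟨v, hvV, hvi, hvw⟩ := hcon V hV.1 hV.2.1
  exact hvw ((hql.1 ⟨hvi, hvV⟩).trans hqw)

end Stmt3Aux

end Stmt3Proof

/-- In an extended Choquet cone, for every idempotent `w` the set
`{x : w ≫ ε(x)}` is open. -/
theorem stmt_3 {C : Type*} [ECCone C] (ε : C → C) (hε : ∀ x, ECCone.IsSuppIdem x (ε x))
    (w : C) (hw : ECCone.IsIdem w) :
    IsOpen {x : C | ECCone.IdemWayBelow w (ε x)} := by
  classical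
  set 𝒟 : Set C := {v : C | ECCone.IsIdem v ∧ ¬ v ≤ w} with h𝒟
  set K : Set C := closure 𝒟 with hK
  have hKidem : ∀ m ∈ K, ECCone.IsIdem m := by
    intro m hm
    have hsub : K ⊆ {v : C | ECCone.IsIdem v} := by
      rw [hK, ← Stmt3Aux.isClosed_idem.closure_eq]
      exact closure_mono (fun v hv => hv.1)
    exact hsub hm
  have hset : {x : C | ECCone.IdemWayBelow w (ε x)} =
      (Prod.fst '' {p : C × C | p.2 ∈ K ∧ p.1 + p.2 = p.1})ᶜ := by
    ext x
    constructor
    · intro hx hmem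
      rw [Set.mem_image] at hmem
      obtain ⟨p, ⟨hpK, hpe⟩, hfst⟩ := hmem
      have hxm : x + p.2 = x := by rw [← hfst]; exact hpe
      have hmi : ECCone.IsIdem p.2 := hKidem p.2 hpK
      have hmle : p.2 ≤ ε x := (hε x).2 p.2 hxm
      obtain ⟨N, hNo, hmN, hN⟩ := Stmt3Aux.nbhd_of_wayBelow hx hmi hmle
      have hpK' : p.2 ∈ closure 𝒟 := by rw [← hK]; exact hpK
      obtain ⟨v, hvN, hvD⟩ := mem_closure_iff.1 hpK' N hNo hmN
      exact hvD.2 (hN v hvN hvD.1)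
    · intro hx
      intro D' hne hDi hdir m' hglb hm'le
      by_contra hno
      push_neg at hno
      have hsub : D' ⊆ 𝒟 := fun v hv => ⟨hDi v hv, hno v hv⟩
      set t : D' → Set C := fun v => closure {z : C | z ∈ D' ∧ z ≤ (v : C)} with ht
      have htc : ∀ v, IsClosed (t v) := fun v => isClosed_closure
      have hfin : ∀ u : Finset D', ((Set.univ : Set C) ∩ ⋂ i ∈ u, t i).Nonempty := by
        intro u
        have key : ∃ z : C, z ∈ D' ∧ ∀ i ∈ u, z ≤ (i : C) := by
          induction u using Finset.induction_on with
          | empty =>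
            obtain ⟨v₀, hv₀⟩ := hne
            exact ⟨v₀, hv₀, by simp⟩
          | @insert i u hni ih =>
            obtain ⟨z, hz, hall⟩ := ih
            obtain ⟨z', hz', hz'1, hz'2⟩ := hdir z hz (i : C) i.2
            refine ⟨z', hz', ?_⟩
            intro j hj
            rcases Finset.mem_insert.1 hj with rfl | hmem
            · exact hz'2
            · exact le_trans hz'1 (hall j hmem)
        obtain ⟨z, hz, hall⟩ := key
        refine ⟨z, trivial, ?_⟩
        simp only [Set.mem_iInter]
        intro i hi
        rw [ht]
        exact subset_closure ⟨hz, hall i hi⟩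
      obtain ⟨p, -, hp⟩ := isCompact_univ.inter_iInter_nonempty t htc hfin
      simp only [Set.mem_iInter] at hp
      have hplb : ∀ v ∈ D', p ≤ v := by
        intro v hv
        have hsub2 : t ⟨v, hv⟩ ⊆ {z : C | z ≤ v} := by
          rw [ht]
          exact closure_minimal (fun z hz => hz.2) (Stmt3Aux.isClosed_Iic' v)
        exact hsub2 (hp ⟨v, hv⟩)
      have hpm : p ≤ m' := hglb.2 (fun a ha => hplb a ha)
      have hple : p ≤ ε x := hpm.trans hm'le
      have hxp : x + p = x := by
        apply le_antisymm
        · calc x + p ≤ x + ε x := Stmt3Aux.add_le_add_left' hple x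
            _ = x := (hε x).1
        · exact Stmt3Aux.le_self_add' x p
      have hpK : p ∈ K := by
        obtain ⟨v₀, hv₀⟩ := hne
        have hsub3 : t ⟨v₀, hv₀⟩ ⊆ K := by
          rw [ht, hK]
          exact closure_mono (fun z hz => hsub hz.1)
        exact hsub3 (hp ⟨v₀, hv₀⟩)
      exact hx (Set.mem_image_of_mem Prod.fst (show ((x, p) : C × C) ∈ {p : C × C | p.2 ∈ K ∧ p.1 + p.2 = p.1} from ⟨hpK, hxp⟩))
  rw [hset]
  have hZc : IsClosed {p : C × C | p.2 ∈ K ∧ p.1 + p.2 = p.1} := by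
    have h1 : IsClosed {p : C × C | p.2 ∈ K} := by
      rw [hK]
      exact isClosed_closure.preimage continuous_snd
    exact h1.inter (isClosed_eq (continuous_fst.add continuous_snd) continuous_fst)
  exact (hZc.isCompact.image continuous_fst).isClosed.isOpen_compl
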